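/- arXiv:2006.07757 — 7 statements merged into one kernel-verified Lean document; each statement's English description precedes it below -/
import Mathlib

section
/- If the assignment a satisfies the 3-SAT instance Γ, then the subset T = S_a ∪ Q of P_Γ has cardinality n − z and is separated from the origin with margin width 1/√(l+1); concretely, the unit vector w = t_a/‖t_a‖ satisfies ⟨w, x⟩ ≥ 1/√(l+1) for every x ∈ T. -/
set_option maxHeartbeats 1000000

private lemma eucl_sum_apply {n : ℕ} {β : Type*} (s : Finset β)
    (g : β → EuclideanSpace ℝ (Fin n)) (j : Fin n) :
    (∑ i ∈ s, g i) j = ∑ i ∈ s, g i j := by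
  classical
  induction s using Finset.cons_induction with
  | empty => rfl
  | cons b s hb ih => rw [Finset.sum_cons, Finset.sum_cons, PiLp.add_apply, ih]


/-- If the assignment `a` satisfies the 3-SAT instance `Γ`, then the subset
`T = S_a ∪ Q` of `P_Γ` has cardinality `n − z` and is separated from the origin with margin
width `1/√(l+1)`; concretely, the unit vector `w = t_a/‖t_a‖` satisfies `⟨w, x⟩ ≥ 1/√(l+1)`
for every `x ∈ T`. -/
theorem satisfying_assignment_gives_margin
    (l m : ℕ) (hl : 1 ≤ l) (hm : 1 ≤ m) (α : ℝ) (hα : 1 / 2 < α)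
    -- the 3-SAT instance: clause j has literals (var j k, sgn j k) for k : Fin 3
    (var : Fin m → Fin 3 → Fin l) (sgn : Fin m → Fin 3 → ℝ)
    (hsgn : ∀ j k, sgn j k = 1 ∨ sgn j k = -1)
    (hvar : ∀ j, Function.Injective (var j))
    -- the assignment
    (a : Fin l → ℝ) (ha : ∀ i, a i = 1 ∨ a i = -1)
    -- the points q_j
    (q : Fin m → EuclideanSpace ℝ (Fin (l + 1)))
    (hq : ∀ j, q j =
      (∑ k : Fin 3, (sgn j k * α) • EuclideanSpace.single ((var j k).castSucc) (1 : ℝ))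
        + (3 * α) • EuclideanSpace.single (Fin.last l) (1 : ℝ))
    (hqinj : Function.Injective q)
    -- a satisfies Γ
    (hsat : ∀ j : Fin m, ∃ k : Fin 3, a (var j k) = sgn j k)
    -- the sets S_a and T = S_a ∪ Q
    (S T : Set (EuclideanSpace ℝ (Fin (l + 1))))
    (hS : S = (Set.range fun i : Fin l => a i • EuclideanSpace.single i.castSucc (1 : ℝ))
        ∪ {EuclideanSpace.single (Fin.last l) (1 : ℝ)})
    (hT : T = S ∪ Set.range q)
    -- the centroid t_a of S_a
    (t : EuclideanSpace ℝ (Fin (l + 1)))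
    (ht : t = ((l : ℝ) + 1)⁻¹ •
      ((∑ i : Fin l, a i • EuclideanSpace.single i.castSucc (1 : ℝ))
        + EuclideanSpace.single (Fin.last l) (1 : ℝ))) :
    T.ncard = 2 * (l + 1) + m - (l + 1) ∧ ‖‖t‖⁻¹ • t‖ = 1 ∧
      ∀ x ∈ T, @inner ℝ _ _ (‖t‖⁻¹ • t) x ≥ 1 / Real.sqrt ((l : ℝ) + 1) := by
  have ha' : ∀ i, a i ≠ 0 := by intro i; rcases ha i with h | h <;> rw [h] <;> norm_num
  have ha2 : ∀ i, a i * a i = 1 := by intro i; rcases ha i with h | h <;> rw [h] <;> norm_num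
  set f : Fin l → EuclideanSpace ℝ (Fin (l + 1)) :=
    fun i => a i • EuclideanSpace.single i.castSucc (1 : ℝ) with hf
  set e : EuclideanSpace ℝ (Fin (l + 1)) := EuclideanSpace.single (Fin.last l) (1 : ℝ) with he
  set v : EuclideanSpace ℝ (Fin (l + 1)) := (∑ i : Fin l, f i) + e with hv
  -- coordinates of v
  have hvc : ∀ i : Fin l, v i.castSucc = a i := by
    intro i
    simp only [hv, hf, he, PiLp.add_apply, eucl_sum_apply, PiLp.smul_apply,
      EuclideanSpace.single_apply, Fin.castSucc_inj, smul_eq_mul, mul_ite, mul_one, mul_zero]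
    rw [Finset.sum_ite_eq Finset.univ i a]
    simp [(Fin.castSucc_lt_last i).ne]
  have hvl : v (Fin.last l) = 1 := by
    simp [hv, hf, he, PiLp.add_apply, eucl_sum_apply, PiLp.smul_apply,
      EuclideanSpace.single_apply, (Fin.castSucc_lt_last _).ne']
  have hsing : ∀ j : Fin (l + 1), @inner ℝ _ _ v (EuclideanSpace.single j (1 : ℝ)) = v j := by
    intro j; rw [EuclideanSpace.inner_single_right]; simp
  -- inner products with v
  have hvf : ∀ i : Fin l, @inner ℝ _ _ v (f i) = 1 := by
    intro i
    rw [hf, real_inner_smul_right, hsing, hvc, ha2]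
  have hve : @inner ℝ _ _ v e = 1 := by rw [he, hsing, hvl]
  have hvq : ∀ j : Fin m, @inner ℝ _ _ v (q j) ≥ 2 * α := by
    intro j
    rw [hq j, inner_add_right, inner_sum, real_inner_smul_right, hsing, hvl]
    have hterm : ∀ k, @inner ℝ _ _ v ((sgn j k * α) • EuclideanSpace.single
        ((var j k).castSucc) (1 : ℝ)) = sgn j k * α * a (var j k) := by
      intro k; rw [real_inner_smul_right, hsing, hvc]
    simp only [hterm]
    have hge : ∀ k, sgn j k * α * a (var j k) ≥ -α := by
      intro k
      rcases hsgn j k with h | h <;> rcases ha (var j k) with h' | h' <;>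
        rw [h, h'] <;> nlinarith
    obtain ⟨k0, hk0⟩ := hsat j
    have heq : sgn j k0 * α * a (var j k0) = α := by
      rw [hk0]; rcases hsgn j k0 with h | h <;> rw [h] <;> ring
    have hsum : ∑ k, sgn j k * α * a (var j k) ≥ -α := by
      rw [← Finset.add_sum_erase _ _ (Finset.mem_univ k0), heq]
      have hb : ∑ _k ∈ Finset.univ.erase k0, (-α) ≤
          ∑ k ∈ Finset.univ.erase k0, sgn j k * α * a (var j k) :=
        Finset.sum_le_sum (fun k _ => hge k)
      rw [Finset.sum_const, Finset.card_erase_of_mem (Finset.mem_univ k0)] at hb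
      simp only [Finset.card_univ, Fintype.card_fin] at hb
      rw [show (3 - 1 : ℕ) = 2 from rfl, nsmul_eq_mul] at hb
      push_cast at hb
      linarith
    linarith
  have hvx : ∀ x ∈ T, @inner ℝ _ _ v x ≥ 1 := by
    intro x hx
    rw [hT, hS] at hx
    rcases hx with (⟨i, rfl⟩ | hx) | ⟨j, rfl⟩
    · rw [hvf]
    · rw [Set.mem_singleton_iff] at hx; rw [hx, hve]
    · have := hvq j; linarith
  -- norm of v and t
  have hvv : @inner ℝ _ _ v v = (l : ℝ) + 1 := by
    nth_rewrite 2 [hv]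
    rw [inner_add_right, inner_sum, hve]
    simp only [hvf]
    simp
  have hl1 : (0 : ℝ) < (l : ℝ) + 1 := by positivity
  set sq : ℝ := Real.sqrt ((l : ℝ) + 1) with hsq
  have hsqpos : 0 < sq := Real.sqrt_pos.mpr hl1
  have hsqsq : sq * sq = (l : ℝ) + 1 := Real.mul_self_sqrt hl1.le
  have hnv : ‖v‖ = sq := by rw [norm_eq_sqrt_real_inner, hvv]
  have hnt : ‖t‖ = sq⁻¹ := by
    rw [ht, norm_smul, hnv]
    rw [Real.norm_eq_abs, abs_of_pos (by positivity)]
    field_simp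
    nlinarith
  have htne : ‖t‖ ≠ 0 := by rw [hnt]; positivity
  refine ⟨?_, ?_, ?_⟩
  · -- cardinality
    have hfinj : Function.Injective f := by
      intro i i' hii
      by_contra hne
      have h2 : f i i.castSucc = f i' i.castSucc := congrArg (fun x => x i.castSucc) hii
      simp only [hf, PiLp.smul_apply, EuclideanSpace.single_apply, smul_eq_mul] at h2
      rw [if_true, if_neg (fun hc => hne (Fin.castSucc_injective _ hc))] at h2
      simp only [mul_one, mul_zero] at h2
      exact ha' i h2
    have hlastf : ∀ i : Fin l, f i (Fin.last l) = 0 := by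
      intro i
      simp [hf, EuclideanSpace.single_apply, (Fin.castSucc_lt_last i).ne']
    have helast : e (Fin.last l) = 1 := by simp [he]
    have hqlast : ∀ j, q j (Fin.last l) = 3 * α := by
      intro j
      rw [hq j]
      simp [PiLp.add_apply, eucl_sum_apply, PiLp.smul_apply,
        EuclideanSpace.single_apply, (Fin.castSucc_lt_last _).ne', he]
    have henf : e ∉ Set.range f := by
      rintro ⟨i, hi⟩
      have : f i (Fin.last l) = e (Fin.last l) := congrArg (fun x => x (Fin.last l)) hi
      rw [hlastf, helast] at this; norm_num at this
    have hdisj : Disjoint S (Set.range q) := by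
      rw [Set.disjoint_left, hS]
      rintro x (⟨i, rfl⟩ | hx) ⟨j, hj⟩
      · have hcl : q j (Fin.last l) = f i (Fin.last l) := congrArg (fun x => x (Fin.last l)) hj
        rw [hqlast, hlastf] at hcl; nlinarith
      · rw [Set.mem_singleton_iff] at hx
        subst hx
        have hcl : q j (Fin.last l) = e (Fin.last l) := congrArg (fun x => x (Fin.last l)) hj
        rw [hqlast, helast] at hcl; nlinarith
    have hScard : S.ncard = l + 1 := by
      rw [hS, Set.ncard_union_eq (Set.disjoint_singleton_right.mpr henf)
        (Set.finite_range f) (Set.finite_singleton _)]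
      rw [Set.ncard_singleton, ← Set.image_univ, Set.ncard_image_of_injective _ hfinj,
        Set.ncard_univ]
      simp
    have hQcard : (Set.range q).ncard = m := by
      rw [← Set.image_univ, Set.ncard_image_of_injective _ hqinj, Set.ncard_univ]; simp
    have hSfin : S.Finite := by
      rw [hS]; exact (Set.finite_range f).union (Set.finite_singleton _)
    rw [hT, Set.ncard_union_eq hdisj hSfin (Set.finite_range q), hScard, hQcard]
    omega
  · rw [norm_smul, Real.norm_eq_abs, abs_of_pos (by positivity : (0:ℝ) < ‖t‖⁻¹)]
    exact inv_mul_cancel₀ htne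
  · intro x hx
    rw [hnt, real_inner_smul_left, ht, real_inner_smul_left, inv_inv]
    have h1 := hvx x hx
    have hkey : sq * (((l : ℝ) + 1)⁻¹ * @inner ℝ _ _ v x) =
        (sq / ((l : ℝ) + 1)) * @inner ℝ _ _ v x := by ring
    rw [hkey]
    have h2 : sq / ((l : ℝ) + 1) = 1 / sq := by
      rw [eq_div_iff (by positivity), div_mul_eq_mul_div, mul_comm]
      rw [← hsqsq]; field_simp
    rw [h2]
    have : (1 / sq) * 1 ≤ (1 / sq) * @inner ℝ _ _ v x :=
      mul_le_mul_of_nonneg_left h1 (by positivity)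
    simpa using this
end

section
/- The 3-SAT instance Γ has a satisfying assignment if and only if there exists a subset T ⊆ P_Γ with |T| = n − z that is separated from the origin with margin width 1/√(l+1), i.e., there exists a unit vector w ∈ ℝ^{l+1} with ⟨w, x⟩ ≥ 1/√(l+1) for every x ∈ T. -/
set_option maxHeartbeats 2000000 in
/-- The 3-SAT instance `Γ` has a satisfying assignment if and only if there exists
a subset `T ⊆ P_Γ` with `|T| = n − z` that is separated from the origin with margin width
`1/√(l+1)`, i.e., there exists a unit vector `w ∈ ℝ^{l+1}` with `⟨w, x⟩ ≥ 1/√(l+1)` for every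
`x ∈ T`. -/
theorem satisfiable_iff_margin
    (l m : ℕ) (hl : 1 ≤ l) (hm : 1 ≤ m) (α : ℝ) (hα : 1 / 2 < α)
    -- the 3-SAT instance: clause j has literals (var j k, sgn j k) for k : Fin 3
    (var : Fin m → Fin 3 → Fin l) (sgn : Fin m → Fin 3 → ℝ)
    (hsgn : ∀ j k, sgn j k = 1 ∨ sgn j k = -1)
    (hvar : ∀ j, Function.Injective (var j))
    -- the points q_j
    (q : Fin m → EuclideanSpace ℝ (Fin (l + 1)))
    (hq : ∀ j, q j =
      (∑ k : Fin 3, (sgn j k * α) • EuclideanSpace.single ((var j k).castSucc) (1 : ℝ))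
        + (3 * α) • EuclideanSpace.single (Fin.last l) (1 : ℝ))
    (hqinj : Function.Injective q)
    -- the point sets U, Q and P_Γ = U ∪ Q
    (U Q PΓ : Set (EuclideanSpace ℝ (Fin (l + 1))))
    (hU : U = {x | ∃ i : Fin (l + 1),
      x = EuclideanSpace.single i (1 : ℝ) ∨ x = -EuclideanSpace.single i (1 : ℝ)})
    (hQ : Q = Set.range q)
    (hP : PΓ = U ∪ Q)
    (n z : ℕ) (hn : n = 2 * (l + 1) + m) (hz : z = l + 1) :
    (∃ a : Fin l → ℝ, (∀ i, a i = 1 ∨ a i = -1) ∧ ∀ j : Fin m, ∃ k : Fin 3,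
        a (var j k) = sgn j k) ↔
      (∃ T ⊆ PΓ, T.ncard = n - z ∧ ∃ w : EuclideanSpace ℝ (Fin (l + 1)), ‖w‖ = 1 ∧
        ∀ x ∈ T, @inner ℝ _ _ w x ≥ 1 / Real.sqrt ((l : ℝ) + 1)) := by
  classical
  subst hU hQ hP hn hz
  set h : ℝ := 1 / Real.sqrt ((l : ℝ) + 1) with hhdef
  have hl1 : (0:ℝ) < (l:ℝ) + 1 := by positivity
  have hsq : (0:ℝ) < Real.sqrt ((l:ℝ) + 1) := Real.sqrt_pos.mpr hl1
  have hpos : 0 < h := by positivity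
  have hh2 : h ^ 2 = 1 / ((l:ℝ) + 1) := by
    rw [hhdef, div_pow, one_pow, Real.sq_sqrt hl1.le]
  -- inner product with a single
  have hip1 : ∀ (v : EuclideanSpace ℝ (Fin (l+1))) (i : Fin (l+1)),
      @inner ℝ _ _ v (EuclideanSpace.single i (1:ℝ)) = v i := by
    intro v i
    simp [EuclideanSpace.inner_single_right]
  -- inner product with q j
  have hip : ∀ (v : EuclideanSpace ℝ (Fin (l+1))) (j : Fin m),
      @inner ℝ _ _ v (q j) =
        (∑ k : Fin 3, sgn j k * α * v ((var j k).castSucc)) + 3 * α * v (Fin.last l) := by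
    intro v j
    rw [hq j, inner_add_right, inner_sum, real_inner_smul_right, hip1]
    congr 1
    refine Finset.sum_congr rfl fun k _ => ?_
    rw [real_inner_smul_right, hip1]
  -- last coordinate of q j
  have hqlast : ∀ j, q j (Fin.last l) = 3 * α := by
    intro j
    rw [hq j]
    have h1 : (∑ k : Fin 3, (sgn j k * α) • EuclideanSpace.single ((var j k).castSucc) (1:ℝ))
        (Fin.last l)
        = ∑ k : Fin 3, ((sgn j k * α) • EuclideanSpace.single ((var j k).castSucc) (1:ℝ))
            (Fin.last l) := by rw [WithLp.ofLp_sum, Finset.sum_apply]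
    have h2 : ∀ k : Fin 3, (Fin.last l) ≠ (var j k).castSucc :=
      fun k => (Fin.ne_of_lt (Fin.castSucc_lt_last _)).symm
    simp [PiLp.add_apply, h1, PiLp.smul_apply, EuclideanSpace.single_apply, h2]
  constructor
  · -- forward direction
    rintro ⟨a, ha, hsat⟩
    set s : Fin (l+1) → ℝ := Fin.snoc a 1 with hsdef
    have hs : ∀ i, s i = 1 ∨ s i = -1 := by
      intro i
      refine Fin.lastCases ?_ ?_ i
      · left; simp [hsdef]
      · intro j; simpa [hsdef] using ha j
    have hsne : ∀ i, s i ≠ 0 := by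
      intro i; rcases hs i with e | e <;> rw [e] <;> norm_num
    set w : EuclideanSpace ℝ (Fin (l+1)) := WithLp.toLp 2 (fun i => s i * h) with hwdef
    have hwi : ∀ i, w i = s i * h := fun _ => rfl
    set f : Fin (l+1) → EuclideanSpace ℝ (Fin (l+1)) :=
      fun i => s i • EuclideanSpace.single i (1:ℝ) with hfdef
    have hfapp : ∀ i i', f i i' = s i * (if i' = i then 1 else 0) := by
      intro i i'
      simp [hfdef, PiLp.smul_apply, EuclideanSpace.single_apply]
    have hfinj : Function.Injective f := by
      intro i i' hii
      by_contra hne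
      have := congrFun (congrArg WithLp.ofLp hii) i
      rw [hfapp, hfapp, if_pos rfl, if_neg (fun hc => hne hc)] at this
      rcases hs i with e | e <;> rw [e] at this <;> norm_num at this
    refine ⟨Set.range f ∪ Set.range q, ?_, ?_, w, ?_, ?_⟩
    · rintro x (⟨i, rfl⟩ | ⟨j, rfl⟩)
      · left
        refine ⟨i, ?_⟩
        rcases hs i with e | e
        · left; rw [hfdef]; simp [e]
        · right; rw [hfdef]; simp [e]
      · right; exact ⟨j, rfl⟩
    · have hdisj : Disjoint (Set.range f) (Set.range q) := by
        rw [Set.disjoint_left]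
        rintro x ⟨i, rfl⟩ ⟨j, hj⟩
        have := congrFun (congrArg WithLp.ofLp hj.symm) (Fin.last l)
        rw [hfapp] at this
        have h3 : q j (Fin.last l) = 3 * α := hqlast j
        rw [h3] at this
        by_cases hc : Fin.last l = i
        · rw [if_pos hc, mul_one] at this
          rcases hs i with e | e <;> rw [e] at this <;> linarith
        · rw [if_neg hc, mul_zero] at this
          linarith
      rw [Set.ncard_union_eq hdisj (Set.finite_range f) (Set.finite_range q),
        ← Set.image_univ, Set.ncard_image_of_injective _ hfinj,
        ← Set.image_univ (f := q), Set.ncard_image_of_injective _ hqinj,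
        Set.ncard_univ, Set.ncard_univ]
      simp only [Nat.card_eq_fintype_card, Fintype.card_fin]
      omega
    · rw [EuclideanSpace.norm_eq]
      have h1 : ∀ i ∈ Finset.univ, ‖w i‖ ^ 2 = 1 / ((l:ℝ)+1) := by
        intro i _
        rw [Real.norm_eq_abs, sq_abs, hwi, mul_pow, hh2]
        rcases hs i with e | e <;> rw [e] <;> ring
      rw [Finset.sum_congr rfl h1, Finset.sum_const, Finset.card_univ, Fintype.card_fin,
        nsmul_eq_mul]
      push_cast
      rw [mul_one_div, div_self (by positivity), Real.sqrt_one]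
    · rintro x (⟨i, rfl⟩ | ⟨j, rfl⟩)
      · rw [hfdef]
        simp only
        rw [real_inner_smul_right, hip1, hwi]
        rcases hs i with e | e <;> rw [e] <;> simp
      · rw [hip w j, Fin.sum_univ_three]
        have e0 : w ((var j 0).castSucc) = a (var j 0) * h := by
          rw [hwi, hsdef, Fin.snoc_castSucc]
        have e1 : w ((var j 1).castSucc) = a (var j 1) * h := by
          rw [hwi, hsdef, Fin.snoc_castSucc]
        have e2 : w ((var j 2).castSucc) = a (var j 2) * h := by
          rw [hwi, hsdef, Fin.snoc_castSucc]
        have elast : w (Fin.last l) = h := by rw [hwi, hsdef, Fin.snoc_last, one_mul]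
        rw [e0, e1, e2, elast]
        obtain ⟨k0, hk0⟩ := hsat j
        have ht : ∀ k : Fin 3, sgn j k * a (var j k) = 1 ∨ sgn j k * a (var j k) = -1 := by
          intro k
          rcases hsgn j k with e | e <;> rcases ha (var j k) with e' | e' <;>
            rw [e, e'] <;> norm_num
        have hex : sgn j 0 * a (var j 0) = 1 ∨ sgn j 1 * a (var j 1) = 1 ∨
            sgn j 2 * a (var j 2) = 1 := by
          have htk0 : sgn j k0 * a (var j k0) = 1 := by
            rw [hk0]; rcases hsgn j k0 with e | e <;> rw [e] <;> norm_num
          fin_cases k0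
          · exact Or.inl htk0
          · exact Or.inr (Or.inl htk0)
          · exact Or.inr (Or.inr htk0)
        have key : sgn j 0 * a (var j 0) + sgn j 1 * a (var j 1) + sgn j 2 * a (var j 2)
            ≥ -1 := by
          rcases hex with e | e | e <;>
            rcases ht 0 with e0' | e0' <;> rcases ht 1 with e1' | e1' <;>
            rcases ht 2 with e2' | e2' <;> linarith
        have hr : sgn j 0 * α * (a (var j 0) * h) + sgn j 1 * α * (a (var j 1) * h)
            + sgn j 2 * α * (a (var j 2) * h) + 3 * α * h
            = α * h * ((sgn j 0 * a (var j 0) + sgn j 1 * a (var j 1)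
              + sgn j 2 * a (var j 2)) + 3) := by ring
        rw [ge_iff_le, hr]
        have h2 : α * ((sgn j 0 * a (var j 0) + sgn j 1 * a (var j 1)
            + sgn j 2 * a (var j 2)) + 3) ≥ 1 := by nlinarith
        nlinarith
  · -- backward direction
    rintro ⟨T, hsub, hcard, w, hw, hinner⟩
    have hcard' : T.ncard = l + 1 + m := by omega
    -- T is finite
    have hUfin : {x : EuclideanSpace ℝ (Fin (l+1)) | ∃ i : Fin (l + 1),
        x = EuclideanSpace.single i (1 : ℝ) ∨ x = -EuclideanSpace.single i (1 : ℝ)}.Finite := by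
      apply Set.Finite.subset (Set.finite_range
        (fun p : Fin (l+1) × Bool =>
          if p.2 then EuclideanSpace.single p.1 (1:ℝ) else -EuclideanSpace.single p.1 (1:ℝ)))
      rintro x ⟨i, hx | hx⟩
      · exact ⟨(i, true), by simp [hx]⟩
      · exact ⟨(i, false), by simp [hx]⟩
    have hTfin : T.Finite := Set.Finite.subset (hUfin.union (Set.finite_range q)) hsub
    haveI : Finite T := hTfin.to_subtype
    -- no antipodal pair is in T
    have hnot : ∀ i : Fin (l+1), EuclideanSpace.single i (1:ℝ) ∈ T →
        -EuclideanSpace.single i (1:ℝ) ∈ T → False := by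
      intro i h1 h2
      have g1 := hinner _ h1
      have g2 := hinner _ h2
      rw [hip1] at g1
      rw [inner_neg_right, hip1] at g2
      linarith
    -- the injection
    have hTmem : ∀ x : T, (∃ i : Fin (l+1),
        (x : EuclideanSpace ℝ (Fin (l+1))) = EuclideanSpace.single i (1:ℝ) ∨
        (x : EuclideanSpace ℝ (Fin (l+1))) = -EuclideanSpace.single i (1:ℝ)) ∨
        (∃ j, q j = (x : EuclideanSpace ℝ (Fin (l+1)))) := by
      intro x
      rcases hsub x.2 with hx | hx
      · exact Or.inl hx
      · exact Or.inr hx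
    set F : T → Fin (l+1) ⊕ Fin m := fun x =>
      if hx : ∃ i : Fin (l+1),
          (x : EuclideanSpace ℝ (Fin (l+1))) = EuclideanSpace.single i (1:ℝ) ∨
          (x : EuclideanSpace ℝ (Fin (l+1))) = -EuclideanSpace.single i (1:ℝ)
      then Sum.inl hx.choose
      else Sum.inr ((hTmem x).resolve_left hx).choose with hF
    have hFl : ∀ (x : T) (hx : ∃ i : Fin (l+1),
        (x : EuclideanSpace ℝ (Fin (l+1))) = EuclideanSpace.single i (1:ℝ) ∨
        (x : EuclideanSpace ℝ (Fin (l+1))) = -EuclideanSpace.single i (1:ℝ)),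
        F x = Sum.inl hx.choose := by
      intro x hx; rw [hF]; exact dif_pos hx
    have hFr : ∀ (x : T) (hx : ¬ ∃ i : Fin (l+1),
        (x : EuclideanSpace ℝ (Fin (l+1))) = EuclideanSpace.single i (1:ℝ) ∨
        (x : EuclideanSpace ℝ (Fin (l+1))) = -EuclideanSpace.single i (1:ℝ)),
        F x = Sum.inr ((hTmem x).resolve_left hx).choose := by
      intro x hx; rw [hF]; exact dif_neg hx
    have hFinj : Function.Injective F := by
      intro x y hxy
      by_cases hx : ∃ i : Fin (l+1),
          (x : EuclideanSpace ℝ (Fin (l+1))) = EuclideanSpace.single i (1:ℝ) ∨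
          (x : EuclideanSpace ℝ (Fin (l+1))) = -EuclideanSpace.single i (1:ℝ) <;>
        by_cases hy : ∃ i : Fin (l+1),
          (y : EuclideanSpace ℝ (Fin (l+1))) = EuclideanSpace.single i (1:ℝ) ∨
          (y : EuclideanSpace ℝ (Fin (l+1))) = -EuclideanSpace.single i (1:ℝ)
      · rw [hFl x hx, hFl y hy] at hxy
        have hii : hx.choose = hy.choose := Sum.inl.inj hxy
        have hsy := hy.choose_spec
        rw [← hii] at hsy
        rcases hx.choose_spec with h1 | h1 <;> rcases hsy with h2 | h2
        · exact Subtype.ext (h1.trans h2.symm)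
        · exact absurd (hnot hx.choose (h1 ▸ x.2) (h2 ▸ y.2)) not_false
        · exact absurd (hnot hx.choose (h2 ▸ y.2) (h1 ▸ x.2)) not_false
        · exact Subtype.ext (h1.trans h2.symm)
      · rw [hFl x hx, hFr y hy] at hxy; exact absurd hxy (by simp)
      · rw [hFr x hx, hFl y hy] at hxy; exact absurd hxy (by simp)
      · rw [hFr x hx, hFr y hy] at hxy
        have hjj := Sum.inr.inj hxy
        have s1 := ((hTmem x).resolve_left hx).choose_spec
        have s2 := ((hTmem y).resolve_left hy).choose_spec
        rw [hjj] at s1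
        exact Subtype.ext (s1.symm.trans s2)
    have hcardeq : Nat.card T = Nat.card (Fin (l+1) ⊕ Fin m) := by
      rw [Nat.card_coe_set_eq, hcard', Nat.card_sum]
      simp only [Nat.card_eq_fintype_card, Fintype.card_fin]
    have hFsurj : Function.Surjective F :=
      ((Nat.bijective_iff_injective_and_card F).mpr ⟨hFinj, hcardeq⟩).2
    -- every signed unit vector slot is hit
    have hU' : ∀ i : Fin (l+1), EuclideanSpace.single i (1:ℝ) ∈ T ∨
        -EuclideanSpace.single i (1:ℝ) ∈ T := by
      intro i
      obtain ⟨x, hx⟩ := hFsurj (Sum.inl i)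
      by_cases hc : ∃ i' : Fin (l+1),
          (x : EuclideanSpace ℝ (Fin (l+1))) = EuclideanSpace.single i' (1:ℝ) ∨
          (x : EuclideanSpace ℝ (Fin (l+1))) = -EuclideanSpace.single i' (1:ℝ)
      · rw [hFl x hc] at hx
        have hii : hc.choose = i := Sum.inl.inj hx
        have hspec := hc.choose_spec
        rw [hii] at hspec
        rcases hspec with h1 | h1
        · exact Or.inl (h1 ▸ x.2)
        · exact Or.inr (h1 ▸ x.2)
      · rw [hFr x hc] at hx; exact absurd hx (by simp)
    have hQ' : ∀ j : Fin m, q j ∈ T := by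
      intro j
      obtain ⟨x, hx⟩ := hFsurj (Sum.inr j)
      by_cases hc : ∃ i' : Fin (l+1),
          (x : EuclideanSpace ℝ (Fin (l+1))) = EuclideanSpace.single i' (1:ℝ) ∨
          (x : EuclideanSpace ℝ (Fin (l+1))) = -EuclideanSpace.single i' (1:ℝ)
      · rw [hFl x hc] at hx; exact absurd hx (by simp)
      · rw [hFr x hc] at hx
        have hjj := Sum.inr.inj hx
        have hspec := ((hTmem x).resolve_left hc).choose_spec
        rw [hjj] at hspec
        exact hspec ▸ x.2
    -- the sign vector
    set s : Fin (l+1) → ℝ := fun i => if EuclideanSpace.single i (1:ℝ) ∈ T then 1 else -1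
      with hsdef
    have hs1 : ∀ i, s i = 1 ∨ s i = -1 := by
      intro i; rw [hsdef]; by_cases hc : EuclideanSpace.single i (1:ℝ) ∈ T <;> simp [hc]
    have hsT : ∀ i, s i • EuclideanSpace.single i (1:ℝ) ∈ T := by
      intro i
      by_cases hc : EuclideanSpace.single i (1:ℝ) ∈ T
      · have : s i = 1 := by rw [hsdef]; simp [hc]
        rw [this, one_smul]; exact hc
      · have : s i = -1 := by rw [hsdef]; simp [hc]
        rw [this, neg_one_smul]
        exact (hU' i).resolve_left hc
    have hwge : ∀ i, s i * w i ≥ h := by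
      intro i
      have := hinner _ (hsT i)
      rwa [real_inner_smul_right, hip1] at this
    -- all coordinates of w are determined
    have hnorm1 : ∑ i, (w i) ^ 2 = 1 := by
      have h1 := hw
      rw [EuclideanSpace.norm_eq] at h1
      have h2 : ∑ i, ‖w i‖ ^ 2 = 1 := by
        have := Real.sqrt_eq_one.mp h1
        exact this
      rw [← h2]
      exact Finset.sum_congr rfl fun i _ => by rw [Real.norm_eq_abs, sq_abs]
    have hterm : ∀ i, (w i) ^ 2 ≥ h ^ 2 := by
      intro i
      have h1 : h ^ 2 ≤ (s i * w i) ^ 2 := by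
        have := hwge i
        nlinarith
      have h2 : (s i * w i) ^ 2 = (w i) ^ 2 := by
        rcases hs1 i with e | e <;> rw [e] <;> ring
      rw [h2] at h1
      exact h1
    have hnn : ∀ i ∈ (Finset.univ : Finset (Fin (l+1))), (0:ℝ) ≤ (w i) ^ 2 - h ^ 2 := by
      intro i _
      linarith [hterm i]
    have hsum0 : ∑ i : Fin (l+1), ((w i) ^ 2 - h ^ 2) = 0 := by
      rw [Finset.sum_sub_distrib, hnorm1, Finset.sum_const, Finset.card_univ,
        Fintype.card_fin, nsmul_eq_mul, hh2]
      push_cast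
      rw [mul_one_div, div_self (by positivity)]
      ring
    have hzero : ∀ i ∈ (Finset.univ : Finset (Fin (l+1))), (w i) ^ 2 - h ^ 2 = 0 :=
      (Finset.sum_eq_zero_iff_of_nonneg hnn).mp hsum0
    have hweq : ∀ i, w i = s i * h := by
      intro i
      have h1 : (w i) ^ 2 = h ^ 2 := by have := hzero i (Finset.mem_univ i); linarith
      rcases hs1 i with e | e <;>
        (have h2 := hwge i; rw [e] at h2 ⊢) <;> nlinarith
    -- the last sign is +1
    have hbound : ∀ j k, sgn j k * α * w ((var j k).castSucc) ≤ α * h := by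
      intro j k
      rw [hweq]
      rcases hsgn j k with e | e <;> rcases hs1 ((var j k).castSucc) with e' | e' <;>
        rw [e, e'] <;> nlinarith
    have hlast : s (Fin.last l) = 1 := by
      by_contra hc
      have hsl : s (Fin.last l) = -1 := (hs1 _).resolve_left hc
      set j : Fin m := ⟨0, hm⟩
      have h1 := hinner _ (hQ' j)
      rw [hip, Fin.sum_univ_three, hweq (Fin.last l), hsl] at h1
      have b0 := hbound j 0
      have b1 := hbound j 1
      have b2 := hbound j 2
      nlinarith
    -- build the assignment
    refine ⟨fun i => s i.castSucc, fun i => hs1 _, fun j => ?_⟩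
    by_contra hcon
    push_neg at hcon
    have hterm' : ∀ k : Fin 3, sgn j k * α * w ((var j k).castSucc) = -(α * h) := by
      intro k
      have h1 := hcon k
      rw [hweq]
      rcases hsgn j k with e | e <;> rcases hs1 ((var j k).castSucc) with e' | e'
      · rw [e, e'] at h1; norm_num at h1
      · rw [e, e']; ring
      · rw [e, e']; ring
      · rw [e, e'] at h1; norm_num at h1
    have h1 := hinner _ (hQ' j)
    rw [hip, Fin.sum_univ_three, hterm' 0, hterm' 1, hterm' 2, hweq (Fin.last l), hlast] at h1
    nlinarith
end

section
/- If the 3-SAT instance Γ has no satisfying assignment, then for every subset T ⊆ P_Γ with |T| = n − z and every h > 0 such that T is separated from the origin with margin width h, one has h ≤ √(12α²·u/(12α² + u)) where u = 1/(l+1); in particular h < 1/√(l+1). -/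
set_option maxHeartbeats 1000000 in
/-- If the 3-SAT instance `Γ` has no satisfying assignment, then for every subset
`T ⊆ P_Γ` with `|T| = n − z` and every `h > 0` such that `T` is separated from the origin with
margin width `h`, one has `h ≤ √(12α²·u/(12α² + u))` where `u = 1/(l+1)`; in particular
`h < 1/√(l+1)`. -/
theorem unsatisfiable_margin_upper_bound
    (l m : ℕ) (hl : 1 ≤ l) (hm : 1 ≤ m) (α : ℝ) (hα : 1 / 2 < α)
    -- the 3-SAT instance: clause j has literals (var j k, sgn j k) for k : Fin 3
    (var : Fin m → Fin 3 → Fin l) (sgn : Fin m → Fin 3 → ℝ)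
    (hsgn : ∀ j k, sgn j k = 1 ∨ sgn j k = -1)
    (hvar : ∀ j, Function.Injective (var j))
    -- the points q_j
    (q : Fin m → EuclideanSpace ℝ (Fin (l + 1)))
    (hq : ∀ j, q j =
      (∑ k : Fin 3, (sgn j k * α) • EuclideanSpace.single ((var j k).castSucc) (1 : ℝ))
        + (3 * α) • EuclideanSpace.single (Fin.last l) (1 : ℝ))
    (hqinj : Function.Injective q)
    -- the point sets U, Q and P_Γ = U ∪ Q
    (U Q PΓ : Set (EuclideanSpace ℝ (Fin (l + 1))))
    (hU : U = {x | ∃ i : Fin (l + 1),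
      x = EuclideanSpace.single i (1 : ℝ) ∨ x = -EuclideanSpace.single i (1 : ℝ)})
    (hQ : Q = Set.range q)
    (hP : PΓ = U ∪ Q)
    (n z : ℕ) (hn : n = 2 * (l + 1) + m) (hz : z = l + 1)
    -- Γ has no satisfying assignment
    (hunsat : ¬ ∃ a : Fin l → ℝ, (∀ i, a i = 1 ∨ a i = -1) ∧ ∀ j : Fin m, ∃ k : Fin 3,
      a (var j k) = sgn j k)
    -- T ⊆ P_Γ with |T| = n - z, separated from the origin with margin width h > 0
    (T : Set (EuclideanSpace ℝ (Fin (l + 1)))) (hT : T ⊆ PΓ) (hTcard : T.ncard = n - z)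
    (h : ℝ) (hh : 0 < h)
    (hsep : ∃ w : EuclideanSpace ℝ (Fin (l + 1)), ‖w‖ = 1 ∧ ∀ x ∈ T, @inner ℝ _ _ w x ≥ h) :
    h ≤ Real.sqrt (12 * α ^ 2 * (1 / ((l : ℝ) + 1)) / (12 * α ^ 2 + 1 / ((l : ℝ) + 1))) ∧
      h < 1 / Real.sqrt ((l : ℝ) + 1) := by
  classical
  obtain ⟨w, hw1, hw2⟩ := hsep
  have hα0 : (0:ℝ) < α := lt_trans (by norm_num) hα
  -- inner product with basis vectors
  have hsing : ∀ i : Fin (l+1), (inner ℝ w (EuclideanSpace.single i (1:ℝ)) : ℝ) = w i := by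
    intro i
    rw [EuclideanSpace.inner_single_right]
    simp
  -- not both e_i and -e_i in T
  have hnb : ∀ i : Fin (l+1),
      ¬ (EuclideanSpace.single i (1:ℝ) ∈ T ∧ -EuclideanSpace.single i (1:ℝ) ∈ T) := by
    rintro i ⟨h1, h2⟩
    have hh1 := hw2 _ h1
    have hh2 := hw2 _ h2
    rw [hsing] at hh1
    rw [inner_neg_right, hsing] at hh2
    linarith
  -- finiteness
  have hQfin : Q.Finite := hQ ▸ Set.finite_range q
  have hUfin : U.Finite := by
    apply Set.Finite.subset (Set.finite_range
      (fun p : Fin (l+1) × Bool =>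
        if p.2 then (EuclideanSpace.single p.1 (1:ℝ) : EuclideanSpace ℝ (Fin (l+1))) else -EuclideanSpace.single p.1 (1:ℝ)))
    rw [hU]
    rintro x ⟨i, hx | hx⟩
    · exact ⟨(i, true), hx.symm⟩
    · exact ⟨(i, false), hx.symm⟩
  -- last coordinate of q j
  have hqlast : ∀ j, q j (Fin.last l) = 3 * α := by
    intro j
    have hne : ∀ k : Fin 3, Fin.last l ≠ (var j k).castSucc :=
      fun k => ((var j k).castSucc_lt_last).ne'
    rw [hq j]
    show (∑ k : Fin 3, (sgn j k * α) • EuclideanSpace.single ((var j k).castSucc) (1 : ℝ)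
        + (3 * α) • EuclideanSpace.single (Fin.last l) (1 : ℝ)) (Fin.last l) = 3 * α
    rw [Fin.sum_univ_three]
    simp [PiLp.add_apply, PiLp.smul_apply, EuclideanSpace.single_apply, hne 0, hne 1, hne 2]
  have hdisj : Disjoint U Q := by
    rw [Set.disjoint_left]
    rintro x hxU hxQ
    rw [hQ] at hxQ
    obtain ⟨j, rfl⟩ := hxQ
    rw [hU] at hxU
    obtain ⟨i, hx | hx⟩ := hxU
    · have : q j (Fin.last l) = (EuclideanSpace.single i (1:ℝ)) (Fin.last l) := by rw [hx]
      rw [hqlast j] at this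
      rw [EuclideanSpace.single_apply] at this
      split_ifs at this <;> linarith
    · have : q j (Fin.last l) = (-EuclideanSpace.single i (1:ℝ)) (Fin.last l) := by rw [hx]
      rw [hqlast j] at this
      have : (3:ℝ) * α = -(if Fin.last l = i then (1:ℝ) else 0) := by
        simpa [EuclideanSpace.single_apply] using this
      split_ifs at this <;> linarith
  -- split T
  have hTUQ : T ⊆ U ∪ Q := hP ▸ hT
  set A := T ∩ U with hA
  set B := T ∩ Q with hB
  have hsplit : T = A ∪ B := by
    rw [hA, hB, ← Set.inter_union_distrib_left]
    exact (Set.inter_eq_self_of_subset_left hTUQ).symm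
  have hAfin : A.Finite := hUfin.subset Set.inter_subset_right
  have hBfin : B.Finite := hQfin.subset Set.inter_subset_right
  have hABdisj : Disjoint A B :=
    Set.disjoint_of_subset Set.inter_subset_right Set.inter_subset_right hdisj
  have hcardT : T.ncard = (l+1) + m := by rw [hTcard, hn, hz]; omega
  have hcardsum : A.ncard + B.ncard = (l+1) + m := by
    rw [← hcardT, hsplit, Set.ncard_union_eq hABdisj hAfin hBfin]
  -- cardinality of Q
  have hQcard : Q.ncard = m := by
    rw [hQ, ← Nat.card_coe_set_eq, Nat.card_range_of_injective hqinj,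
      Nat.card_eq_fintype_card, Fintype.card_fin]
  have hBle : B.ncard ≤ m := hQcard ▸ Set.ncard_le_ncard Set.inter_subset_right hQfin
  -- the choice function g
  set g : Fin (l+1) → EuclideanSpace ℝ (Fin (l+1)) := fun i =>
    if EuclideanSpace.single i (1:ℝ) ∈ T then EuclideanSpace.single i (1:ℝ)
    else -EuclideanSpace.single i (1:ℝ) with hg
  have hAg : A ⊆ Set.range g := by
    rintro x ⟨hxT, hxU⟩
    rw [hU] at hxU
    obtain ⟨i, rfl | rfl⟩ := hxU
    · exact ⟨i, by simp [hg, hxT]⟩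
    · refine ⟨i, ?_⟩
      have hni : EuclideanSpace.single i (1:ℝ) ∉ T := fun hmem => hnb i ⟨hmem, hxT⟩
      simp [hg, hni]
  have hrgcard : (Set.range g).ncard ≤ l + 1 := by
    rw [← Set.image_univ]
    calc (g '' Set.univ).ncard ≤ (Set.univ : Set (Fin (l+1))).ncard :=
          Set.ncard_image_le Set.finite_univ
      _ = l + 1 := by rw [Set.ncard_univ, Nat.card_eq_fintype_card, Fintype.card_fin]
  have hAle : A.ncard ≤ l + 1 :=
    le_trans (Set.ncard_le_ncard hAg (Set.finite_range g)) hrgcard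
  have hAcard : A.ncard = l + 1 := by omega
  have hBcard : B.ncard = m := by omega
  -- B = Q, so all q j are in T
  have hBQ : B = Q := Set.eq_of_subset_of_ncard_le Set.inter_subset_right
    (by rw [hQcard, hBcard]) hQfin
  have hqT : ∀ j, q j ∈ T := by
    intro j
    have : q j ∈ Q := hQ ▸ Set.mem_range_self j
    rw [← hBQ] at this
    exact this.1
  -- A = range g, so all g i are in T
  have hArg : A = Set.range g := Set.eq_of_subset_of_ncard_le hAg
    (by rw [hAcard]; exact hrgcard) (Set.finite_range g)
  have hgT : ∀ i, g i ∈ T := by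
    intro i
    have : g i ∈ A := hArg ▸ Set.mem_range_self i
    exact this.1
  -- the assignment a
  set a : Fin (l+1) → ℝ := fun i =>
    if EuclideanSpace.single i (1:ℝ) ∈ T then (1:ℝ) else -1 with ha
  have hasgn : ∀ i, a i = 1 ∨ a i = -1 := by
    intro i; rw [ha]; dsimp only; split_ifs <;> simp
  have hkey : ∀ i, h ≤ a i * w i := by
    intro i
    have hgi := hw2 _ (hgT i)
    rw [hg] at hgi
    dsimp only at hgi
    rw [ha]; dsimp only
    split_ifs at hgi ⊢ with ht
    · rw [hsing] at hgi; linarith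
    · rw [inner_neg_right, hsing] at hgi; linarith
  have habs : ∀ i, h^2 ≤ (w i)^2 := by
    intro i
    rcases hasgn i with h1 | h1 <;> have h2 := hkey i <;> rw [h1] at h2 <;> nlinarith
  -- unsatisfied clause
  have hex : ∃ j : Fin m, ∀ k, a ((var j k).castSucc) ≠ sgn j k := by
    by_contra hc
    push_neg at hc
    exact hunsat ⟨fun i => a i.castSucc, fun i => hasgn _, hc⟩
  obtain ⟨j, hj⟩ := hex
  have hneg : ∀ k, a ((var j k).castSucc) = - sgn j k := by
    intro k
    have hne := hj k
    rcases hasgn ((var j k).castSucc) with h1 | h1 <;> rcases hsgn j k with h2 | h2 <;>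
      (revert hne; norm_num [h1, h2])
  have hterm : ∀ k, sgn j k * w ((var j k).castSucc) ≤ -h := by
    intro k
    have h1 := hkey ((var j k).castSucc)
    rw [hneg k] at h1
    nlinarith [h1]
  -- inner product with q j
  have hinq : (inner ℝ w (q j) : ℝ) =
      sgn j 0 * α * w ((var j 0).castSucc) + sgn j 1 * α * w ((var j 1).castSucc)
      + sgn j 2 * α * w ((var j 2).castSucc) + 3 * α * w (Fin.last l) := by
    rw [hq j, Fin.sum_univ_three]
    rw [inner_add_right, inner_add_right, inner_add_right, real_inner_smul_right,
      real_inner_smul_right, real_inner_smul_right, real_inner_smul_right,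
      hsing, hsing, hsing, hsing]
    all_goals ring
  have hqineq := hw2 _ (hqT j)
  rw [hinq] at hqineq
  have hlast : h * (1 + 3*α) ≤ 3 * α * w (Fin.last l) := by
    have t0 := hterm 0; have t1 := hterm 1; have t2 := hterm 2
    nlinarith [mul_le_mul_of_nonneg_left t0 hα0.le,
      mul_le_mul_of_nonneg_left t1 hα0.le, mul_le_mul_of_nonneg_left t2 hα0.le]
  have hwlast : 0 < w (Fin.last l) := by nlinarith
  -- norm decomposition
  have hsum : ∑ i, (w i)^2 = 1 := by
    have h1 : Real.sqrt (∑ i, ‖w i‖^2) = 1 := by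
      rw [← EuclideanSpace.norm_eq, hw1]
    have h2 := Real.sqrt_eq_one.mp h1
    simpa [Real.norm_eq_abs, sq_abs] using h2
  have hsplitsum : ∑ i : Fin l, (w i.castSucc)^2 + (w (Fin.last l))^2 = 1 := by
    rw [← hsum, Fin.sum_univ_castSucc]
  have hlsum : (l:ℝ) * h^2 ≤ ∑ i : Fin l, (w i.castSucc)^2 := by
    calc (l:ℝ) * h^2 = ∑ _i : Fin l, h^2 := by
          rw [Finset.sum_const, Finset.card_univ, Fintype.card_fin, nsmul_eq_mul]
      _ ≤ ∑ i : Fin l, (w i.castSucc)^2 := Finset.sum_le_sum fun i _ => habs _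
  have F1 : (l:ℝ) * h^2 + (w (Fin.last l))^2 ≤ 1 := by linarith
  have F2 : (h*(1+3*α))^2 ≤ (3*α*w (Fin.last l))^2 := by
    have hnn : 0 ≤ h*(1+3*α) := by positivity
    nlinarith [hlast, hnn]
  have F1' : 12*α^2*((l:ℝ)*h^2 + (w (Fin.last l))^2) ≤ 12*α^2 :=
    by nlinarith [F1, sq_nonneg α]
  set L : ℝ := (l:ℝ) + 1 with hL
  have hLpos : (0:ℝ) < L := by positivity
  have key' : h^2 * (12*α^2*L + 1) ≤ 12*α^2 := by
    nlinarith [F1', F2, mul_nonneg hα0.le (sq_nonneg h), sq_nonneg h]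
  constructor
  · have hX : 12*α^2*(1/L)/(12*α^2+1/L) = 12*α^2/(12*α^2*L+1) := by
      field_simp
      all_goals ring
    rw [hX]
    rw [Real.le_sqrt hh.le (by positivity)]
    rw [le_div_iff₀ (by positivity)]
    linarith
  · have h2lt : h^2 < 1/L := by
      rw [lt_div_iff₀ hLpos]
      nlinarith [key', mul_pos hh hh, mul_pos hα0 hα0]
    have : (1:ℝ)/Real.sqrt L = Real.sqrt (1/L) := by
      rw [one_div, one_div, Real.sqrt_inv]
    rw [this, Real.lt_sqrt hh.le]
    exact h2lt
end

section
/- If the assignment a satisfies the clause E_j (i.e., some literal (i,s) of E_j has a(i) = s), then ⟨q_j, t_a/‖t_a‖⟩ ≥ 2α/√(l+1) > 1/√(l+1). -/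
/-- If the assignment `a` satisfies the clause `E_j` (i.e., some literal `(i,s)` of
`E_j` has `a(i) = s`), then `⟨q_j, t_a/‖t_a‖⟩ ≥ 2α/√(l+1) > 1/√(l+1)`. -/
theorem satisfied_clause_inner_lower_bound
    (l : ℕ) (hl : 1 ≤ l) (α : ℝ) (hα : 1 / 2 < α)
    -- the clause E_j: literals (var k, sgn k) for k : Fin 3, on pairwise distinct variables
    (var : Fin 3 → Fin l) (sgn : Fin 3 → ℝ)
    (hsgn : ∀ k, sgn k = 1 ∨ sgn k = -1)
    (hvar : Function.Injective var)
    -- the assignment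
    (a : Fin l → ℝ) (ha : ∀ i, a i = 1 ∨ a i = -1)
    -- the point q_j
    (q : EuclideanSpace ℝ (Fin (l + 1)))
    (hq : q = (∑ k : Fin 3, (sgn k * α) • EuclideanSpace.single ((var k).castSucc) (1 : ℝ))
        + (3 * α) • EuclideanSpace.single (Fin.last l) (1 : ℝ))
    -- the centroid t_a of S_a
    (t : EuclideanSpace ℝ (Fin (l + 1)))
    (ht : t = ((l : ℝ) + 1)⁻¹ •
      ((∑ i : Fin l, a i • EuclideanSpace.single i.castSucc (1 : ℝ))
        + EuclideanSpace.single (Fin.last l) (1 : ℝ)))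
    -- a satisfies the clause E_j
    (hsat : ∃ k : Fin 3, a (var k) = sgn k) :
    @inner ℝ _ _ q (‖t‖⁻¹ • t) ≥ 2 * α / Real.sqrt ((l : ℝ) + 1) ∧
      2 * α / Real.sqrt ((l : ℝ) + 1) > 1 / Real.sqrt ((l : ℝ) + 1) := by
  have hL : (0:ℝ) < (l:ℝ) + 1 := by positivity
  have hsq : Real.sqrt ((l:ℝ)+1) > 0 := Real.sqrt_pos.mpr hL
  -- coordinates of t
  have happly : ∀ (j : Fin (l+1)),
      (∑ i : Fin l, a i • EuclideanSpace.single i.castSucc (1:ℝ)) j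
        = ∑ i : Fin l, (a i • EuclideanSpace.single i.castSucc (1:ℝ)) j :=
    fun j => by rw [WithLp.ofLp_sum]; exact Finset.sum_apply j _ _
  have htc : ∀ i : Fin l, t i.castSucc = ((l:ℝ)+1)⁻¹ * a i := by
    intro i
    have hne : (Fin.last l : Fin (l+1)) ≠ i.castSucc := (Fin.castSucc_lt_last i).ne'
    simp [ht, happly, EuclideanSpace.single_apply, Fin.castSucc_inj,
      hne.symm, Finset.sum_ite_eq', mul_comm]
  have htl : t (Fin.last l) = ((l:ℝ)+1)⁻¹ := by
    have hne : ∀ i : Fin l, Fin.last l ≠ i.castSucc := fun i => (Fin.castSucc_lt_last i).ne'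
    simp [ht, happly, EuclideanSpace.single_apply, hne]
  -- norm of t
  have hnt : ‖t‖ = (Real.sqrt ((l:ℝ)+1))⁻¹ := by
    have : ‖t‖ = Real.sqrt (∑ i : Fin (l+1), ‖t i‖ ^ 2) := by
      rw [EuclideanSpace.norm_eq]
    rw [this, Fin.sum_univ_castSucc]
    have h1 : ∀ i : Fin l, ‖t i.castSucc‖ ^ 2 = (((l:ℝ)+1)⁻¹) ^ 2 := by
      intro i
      rw [htc i, norm_mul]
      rcases ha i with h | h <;> simp [h, abs_of_pos (inv_pos.mpr hL), mul_pow]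
    rw [Finset.sum_congr rfl fun i _ => h1 i, Finset.sum_const, htl]
    simp only [Finset.card_univ, Fintype.card_fin, nsmul_eq_mul]
    have : (l:ℝ) * (((l:ℝ)+1)⁻¹) ^ 2 + ‖(((l:ℝ)+1)⁻¹ : ℝ)‖ ^ 2 = ((l:ℝ)+1)⁻¹ := by
      rw [Real.norm_eq_abs, sq_abs]
      field_simp
    rw [this, Real.sqrt_inv]
  -- inner product
  have hin : (inner ℝ q t : ℝ)
      = ((l:ℝ)+1)⁻¹ * (α * (∑ k : Fin 3, sgn k * a (var k)) + 3 * α) := by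
    rw [hq, inner_add_left, sum_inner, real_inner_smul_left]
    have h1 : ∀ k : Fin 3, (inner ℝ ((sgn k * α) • EuclideanSpace.single ((var k).castSucc) (1:ℝ)) t : ℝ)
        = (sgn k * α) * (((l:ℝ)+1)⁻¹ * a (var k)) := by
      intro k
      rw [real_inner_smul_left, EuclideanSpace.inner_single_left, htc]
      simp
    rw [Finset.sum_congr rfl fun k _ => h1 k, EuclideanSpace.inner_single_left, htl]
    simp only [map_one, one_mul, Fin.sum_univ_three]
    ring
  -- bound the sum
  have hterm : ∀ k : Fin 3, sgn k * a (var k) ≥ -1 := by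
    intro k
    rcases hsgn k with h | h <;> rcases ha (var k) with h' | h' <;> simp [h, h']
  obtain ⟨k0, hk0⟩ := hsat
  have hk0' : sgn k0 * a (var k0) = 1 := by
    rw [hk0]; rcases hsgn k0 with h | h <;> simp [h]
  have hsum : (∑ k : Fin 3, sgn k * a (var k)) ≥ -1 := by
    rw [Fin.sum_univ_three]
    fin_cases k0
    · linarith [hterm 1, hterm 2, show sgn 0 * a (var 0) = 1 from hk0']
    · linarith [hterm 0, hterm 2, show sgn 1 * a (var 1) = 1 from hk0']
    · linarith [hterm 0, hterm 1, show sgn 2 * a (var 2) = 1 from hk0']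
  have hαpos : (0:ℝ) < α := by linarith
  have hin_ge : (inner ℝ q t : ℝ) ≥ ((l:ℝ)+1)⁻¹ * (2 * α) := by
    rw [hin]
    have : α * (∑ k : Fin 3, sgn k * a (var k)) + 3 * α ≥ 2 * α := by nlinarith
    have h2 := inv_pos.mpr hL
    nlinarith
  constructor
  · rw [real_inner_smul_right, hnt, inv_inv]
    have key : Real.sqrt ((l:ℝ)+1) * (((l:ℝ)+1)⁻¹ * (2 * α)) = 2 * α / Real.sqrt ((l:ℝ)+1) := by
      rw [eq_div_iff hsq.ne']
      have : Real.sqrt ((l:ℝ)+1) * Real.sqrt ((l:ℝ)+1) = (l:ℝ)+1 :=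
        Real.mul_self_sqrt hL.le
      field_simp
      nlinarith [this]
    calc Real.sqrt ((l:ℝ)+1) * (inner ℝ q t : ℝ)
        ≥ Real.sqrt ((l:ℝ)+1) * (((l:ℝ)+1)⁻¹ * (2 * α)) := by
          exact mul_le_mul_of_nonneg_left hin_ge hsq.le
      _ = 2 * α / Real.sqrt ((l:ℝ)+1) := key
  · rw [gt_iff_lt, div_lt_div_iff₀ hsq hsq]
    nlinarith
end

section
/- If the assignment a falsifies the clause E_j (i.e., every literal (i,s) of E_j has a(i) ≠ s), then ⟨q_j, t_a⟩ ≤ 0. -/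
/-- If the assignment `a` falsifies the clause `E_j` (i.e., every literal `(i,s)` of
`E_j` has `a(i) ≠ s`), then `⟨q_j, t_a⟩ ≤ 0`. -/
theorem falsified_clause_inner_nonpos
    (l : ℕ) (hl : 1 ≤ l) (α : ℝ) (hα : 1 / 2 < α)
    -- the clause E_j: literals (var k, sgn k) for k : Fin 3, on pairwise distinct variables
    (var : Fin 3 → Fin l) (sgn : Fin 3 → ℝ)
    (hsgn : ∀ k, sgn k = 1 ∨ sgn k = -1)
    (hvar : Function.Injective var)
    -- the assignment
    (a : Fin l → ℝ) (ha : ∀ i, a i = 1 ∨ a i = -1)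
    -- the point q_j
    (q : EuclideanSpace ℝ (Fin (l + 1)))
    (hq : q = (∑ k : Fin 3, (sgn k * α) • EuclideanSpace.single ((var k).castSucc) (1 : ℝ))
        + (3 * α) • EuclideanSpace.single (Fin.last l) (1 : ℝ))
    -- the centroid t_a of S_a
    (t : EuclideanSpace ℝ (Fin (l + 1)))
    (ht : t = ((l : ℝ) + 1)⁻¹ •
      ((∑ i : Fin l, a i • EuclideanSpace.single i.castSucc (1 : ℝ))
        + EuclideanSpace.single (Fin.last l) (1 : ℝ)))
    -- a falsifies the clause E_j
    (hfalse : ∀ k : Fin 3, a (var k) ≠ sgn k) :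
    @inner ℝ _ _ q t ≤ 0 := by
  have hav : ∀ k, a (var k) = -sgn k := by
    intro k
    rcases hsgn k with h | h <;> rcases ha (var k) with h2 | h2
    · exact absurd (h2.trans h.symm) (hfalse k)
    · simp [h2, h]
    · simp [h2, h]
    · exact absurd (h2.trans h.symm) (hfalse k)
  have key : @inner ℝ _ _ q t = 0 := by
    rw [hq, ht]
    simp only [inner_add_left, inner_add_right, inner_smul_left, inner_smul_right,
      sum_inner, inner_sum, real_inner_smul_left, real_inner_smul_right,
      EuclideanSpace.inner_single_left, EuclideanSpace.single_apply,
      RCLike.conj_to_real, conj_trivial]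
    have hne : ∀ x : Fin l, ¬ (Fin.last l = x.castSucc) := fun x => (Fin.castSucc_lt_last x).ne'
    have hne2 : ∀ k : Fin 3, ¬ ((var k).castSucc = Fin.last l) := fun k => (Fin.castSucc_lt_last _).ne
    have hsq : ∀ k : Fin 3, a (var k) * (sgn k * α) = -α := by
      intro k
      rw [hav k]
      rcases hsgn k with h | h <;> rw [h] <;> ring
    simp only [hne, hne2, if_false, if_true, one_mul, mul_zero, mul_one, add_zero, zero_add,
      Fin.castSucc_inj, mul_ite, Finset.mul_sum]
    rw [Finset.sum_comm]
    simp only [Finset.sum_ite_eq, Finset.mem_univ, if_true, hsq]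
    simp
  rw [key]
end

section
/- Let H be a real inner product space, let q, t ∈ H be nonzero vectors with ⟨q, t⟩ ≤ 0, and suppose there exist w ∈ H with ‖w‖ = 1 and h ∈ ℝ such that ⟨w, q⟩ ≥ h and ⟨w, t⟩ ≥ h. Then h ≤ ‖q‖·‖t‖/√(‖q‖² + ‖t‖²), and moreover ‖q‖·‖t‖/√(‖q‖² + ‖t‖²) < ‖t‖. -/
/-- Let `H` be a real inner product space, let `q, t ∈ H` be nonzero vectors with
`⟨q, t⟩ ≤ 0`, and suppose there exist `w ∈ H` with `‖w‖ = 1` and `h ∈ ℝ` such that `⟨w, q⟩ ≥ h`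
and `⟨w, t⟩ ≥ h`. Then `h ≤ ‖q‖·‖t‖/√(‖q‖² + ‖t‖²)`, and moreover
`‖q‖·‖t‖/√(‖q‖² + ‖t‖²) < ‖t‖`. -/
theorem margin_bound_of_obtuse
    {H : Type*} [NormedAddCommGroup H] [InnerProductSpace ℝ H]
    (q t : H) (hq : q ≠ 0) (ht : t ≠ 0)
    (hqt : @inner ℝ _ _ q t ≤ 0)
    (w : H) (hw : ‖w‖ = 1) (h : ℝ)
    (hwq : @inner ℝ _ _ w q ≥ h) (hwt : @inner ℝ _ _ w t ≥ h) :
    h ≤ ‖q‖ * ‖t‖ / Real.sqrt (‖q‖ ^ 2 + ‖t‖ ^ 2) ∧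
      ‖q‖ * ‖t‖ / Real.sqrt (‖q‖ ^ 2 + ‖t‖ ^ 2) < ‖t‖ := by
  set Q := ‖q‖ with hQ
  set T := ‖t‖ with hT
  have hQ0 : 0 < Q := norm_pos_iff.mpr hq
  have hT0 : 0 < T := norm_pos_iff.mpr ht
  set S := Real.sqrt (Q ^ 2 + T ^ 2) with hS
  have hS2 : S ^ 2 = Q ^ 2 + T ^ 2 := Real.sq_sqrt (by positivity)
  have hS0 : 0 < S := Real.sqrt_pos.mpr (by positivity)
  constructor
  · -- main bound
    set v : H := (T ^ 2) • q + (Q ^ 2) • t with hv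
    have hwv : h * (T ^ 2 + Q ^ 2) ≤ @inner ℝ _ _ w v := by
      have : @inner ℝ _ _ w v = T ^ 2 * @inner ℝ _ _ w q + Q ^ 2 * @inner ℝ _ _ w t := by
        rw [hv, inner_add_right, real_inner_smul_right, real_inner_smul_right]
      rw [this]
      nlinarith [sq_nonneg Q, sq_nonneg T]
    have hnv : ‖v‖ ^ 2 ≤ (Q * T * S) ^ 2 := by
      have hexp : ‖v‖ ^ 2 = (T ^ 2) ^ 2 * Q ^ 2 + 2 * (T ^ 2 * Q ^ 2) * @inner ℝ _ _ q t
          + (Q ^ 2) ^ 2 * T ^ 2 := by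
        rw [hv, @norm_add_sq_real, norm_smul, norm_smul, real_inner_smul_left,
          real_inner_smul_right]
        simp [abs_of_nonneg (sq_nonneg T), abs_of_nonneg (sq_nonneg Q)]
        ring
      rw [hexp]
      have : (Q * T * S) ^ 2 = Q ^ 2 * T ^ 2 * (Q ^ 2 + T ^ 2) := by
        rw [mul_pow, mul_pow, hS2]
      rw [this]
      nlinarith [hqt, mul_nonneg (mul_nonneg (sq_nonneg T) (sq_nonneg Q)) (neg_nonneg.mpr hqt)]
    have hnv' : ‖v‖ ≤ Q * T * S := by
      have : 0 ≤ Q * T * S := by positivity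
      nlinarith [norm_nonneg v]
    have hcs : @inner ℝ _ _ w v ≤ ‖v‖ := by
      have := real_inner_le_norm w v
      rwa [hw, one_mul] at this
    have key : h * (T ^ 2 + Q ^ 2) ≤ Q * T * S := le_trans hwv (le_trans hcs hnv')
    rw [le_div_iff₀ hS0]
    have h2 : h * S * S ≤ Q * T * S := by
      have e : h * S * S = h * (T ^ 2 + Q ^ 2) := by rw [show h * S * S = h * S ^ 2 from by ring, hS2]; ring
      rw [e]; exact key
    exact le_of_mul_le_mul_right h2 hS0
  · rw [div_lt_iff₀ hS0]
    have hQS : Q < S := by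
      have : Q = Real.sqrt (Q ^ 2) := (Real.sqrt_sq hQ0.le).symm
      rw [this, hS]
      exact Real.sqrt_lt_sqrt (by positivity) (by nlinarith)
    nlinarith
end

section
/- Let T ⊆ P_Γ with |T| = n − z, and suppose there exist a unit vector w ∈ ℝ^{l+1} and h > 0 with ⟨w, x⟩ ≥ h for every x ∈ T. Then Q ⊆ T and, for each i ∈ {1,…,l+1}, exactly one of the two points e_i and −e_i belongs to T. -/
/-- Let `T ⊆ P_Γ` with `|T| = n − z`, and suppose there exist a unit vector
`w ∈ ℝ^{l+1}` and `h > 0` with `⟨w, x⟩ ≥ h` for every `x ∈ T`. Then `Q ⊆ T` and, for each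
`i ∈ {1,…,l+1}`, exactly one of the two points `e_i` and `−e_i` belongs to `T`. -/
theorem separated_subset_structure
    (l m : ℕ) (hl : 1 ≤ l) (hm : 1 ≤ m) (α : ℝ) (hα : 1 / 2 < α)
    -- the 3-SAT instance: clause j has literals (var j k, sgn j k) for k : Fin 3
    (var : Fin m → Fin 3 → Fin l) (sgn : Fin m → Fin 3 → ℝ)
    (hsgn : ∀ j k, sgn j k = 1 ∨ sgn j k = -1)
    (hvar : ∀ j, Function.Injective (var j))
    -- the points q_j
    (q : Fin m → EuclideanSpace ℝ (Fin (l + 1)))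
    (hq : ∀ j, q j =
      (∑ k : Fin 3, (sgn j k * α) • EuclideanSpace.single ((var j k).castSucc) (1 : ℝ))
        + (3 * α) • EuclideanSpace.single (Fin.last l) (1 : ℝ))
    (hqinj : Function.Injective q)
    -- the point sets U, Q and P_Γ = U ∪ Q
    (U Q PΓ : Set (EuclideanSpace ℝ (Fin (l + 1))))
    (hU : U = {x | ∃ i : Fin (l + 1),
      x = EuclideanSpace.single i (1 : ℝ) ∨ x = -EuclideanSpace.single i (1 : ℝ)})
    (hQ : Q = Set.range q)
    (hP : PΓ = U ∪ Q)
    (n z : ℕ) (hn : n = 2 * (l + 1) + m) (hz : z = l + 1)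
    -- T ⊆ P_Γ with |T| = n - z, separated from the origin with margin width h > 0
    (T : Set (EuclideanSpace ℝ (Fin (l + 1)))) (hT : T ⊆ PΓ) (hTcard : T.ncard = n - z)
    (w : EuclideanSpace ℝ (Fin (l + 1))) (hw : ‖w‖ = 1) (h : ℝ) (hh : 0 < h)
    (hsep : ∀ x ∈ T, @inner ℝ _ _ w x ≥ h) :
    Q ⊆ T ∧ ∀ i : Fin (l + 1),
      Xor' (EuclideanSpace.single i (1 : ℝ) ∈ T) (-EuclideanSpace.single i (1 : ℝ) ∈ T) := by
  classical
  -- not both e_i and -e_i in T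
  have hnotboth : ∀ i : Fin (l + 1),
      ¬ (EuclideanSpace.single i (1 : ℝ) ∈ T ∧ -EuclideanSpace.single i (1 : ℝ) ∈ T) := by
    rintro i ⟨h1, h2⟩
    have s1 := hsep _ h1
    have s2 := hsep _ h2
    rw [EuclideanSpace.inner_single_right] at s1
    rw [inner_neg_right, EuclideanSpace.inner_single_right] at s2
    simp only [RCLike.star_def, starRingEnd_apply, star_trivial, one_mul] at s1 s2
    linarith
  -- index uniqueness facts
  have hne : ∀ i j : Fin (l + 1),
      EuclideanSpace.single i (1 : ℝ) ≠ -EuclideanSpace.single j (1 : ℝ) := by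
    intro i j hij
    have h1 : (EuclideanSpace.single i (1 : ℝ)) i = (-EuclideanSpace.single j (1 : ℝ)) i :=
      congrArg (fun v => v i) hij
    have h2 : (-EuclideanSpace.single j (1 : ℝ)) i = -(EuclideanSpace.single j (1:ℝ) i) := rfl
    rw [h2] at h1
    rw [EuclideanSpace.single_apply, EuclideanSpace.single_apply] at h1
    by_cases hji : i = j <;> simp [hji] at h1 <;> linarith
  have hinj : ∀ i j : Fin (l + 1),
      EuclideanSpace.single i (1 : ℝ) = EuclideanSpace.single j (1 : ℝ) → i = j := by
    intro i j hij
    have h1 : (EuclideanSpace.single i (1 : ℝ)) i = (EuclideanSpace.single j (1 : ℝ)) i :=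
      congrArg (fun v => v i) hij
    rw [EuclideanSpace.single_apply, EuclideanSpace.single_apply] at h1
    by_contra hc
    simp [hc] at h1
  -- the index function
  set f : EuclideanSpace ℝ (Fin (l + 1)) → Fin (l + 1) := fun x =>
    if hx : ∃ i : Fin (l + 1),
        x = EuclideanSpace.single i (1 : ℝ) ∨ x = -EuclideanSpace.single i (1 : ℝ) then
      hx.choose else 0 with hf
  have hfspec : ∀ x ∈ U, x = EuclideanSpace.single (f x) (1 : ℝ) ∨
      x = -EuclideanSpace.single (f x) (1 : ℝ) := by
    intro x hx
    rw [hU] at hx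
    have hfx : f x = hx.choose := dif_pos hx
    rw [hfx]
    exact hx.choose_spec
  have hfval : ∀ (i : Fin (l+1)) (x : EuclideanSpace ℝ (Fin (l+1))), x ∈ U →
      (x = EuclideanSpace.single i (1 : ℝ) ∨ x = -EuclideanSpace.single i (1 : ℝ)) →
      f x = i := by
    intro i x hxU hxi
    rcases hfspec x hxU with h1 | h1 <;> rcases hxi with h2 | h2
    · exact hinj _ _ (h1.symm.trans h2)
    · exact absurd (h1.symm.trans h2) (hne _ _)
    · exact absurd (h2.symm.trans h1) (hne _ _)
    · have : EuclideanSpace.single (f x) (1:ℝ) = EuclideanSpace.single i (1:ℝ) := by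
        have := h1.symm.trans h2
        exact neg_injective this
      exact hinj _ _ this
  -- finiteness
  have hUfin : U.Finite := by
    have : U ⊆ (Set.range fun i : Fin (l+1) => EuclideanSpace.single i (1 : ℝ)) ∪
        (Set.range fun i : Fin (l+1) => -EuclideanSpace.single i (1 : ℝ)) := by
      rw [hU]; rintro x ⟨i, hi | hi⟩
      · exact Or.inl ⟨i, hi.symm⟩
      · exact Or.inr ⟨i, hi.symm⟩
    exact ((Set.finite_range _).union (Set.finite_range _)).subset this
  have hQfin : Q.Finite := by rw [hQ]; exact Set.finite_range q
  have hQcard : Q.ncard = m := by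
    rw [hQ, ← Set.image_univ, Set.ncard_image_of_injective _ hqinj, Set.ncard_univ]
    simp
  -- injectivity of f on T ∩ U
  have hfinj : Set.InjOn f (T ∩ U) := by
    rintro x ⟨hxT, hxU⟩ y ⟨hyT, hyU⟩ hxy
    rcases hfspec x hxU with h1 | h1 <;> rcases hfspec y hyU with h2 | h2
    · rw [h1, h2, hxy]
    · exact absurd ⟨hxy ▸ h1 ▸ hxT, h2 ▸ hyT⟩ (hnotboth (f y))
    · exact absurd ⟨h2 ▸ hyT, hxy ▸ h1 ▸ hxT⟩ (hnotboth (f y))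
    · rw [h1, h2, hxy]
  -- counting
  have hTU : (T ∩ U).ncard ≤ l + 1 := by
    have := Set.ncard_le_ncard_of_injOn f
      (fun a _ => Set.mem_univ (f a)) hfinj (Set.finite_univ (α := Fin (l+1)))
    simpa [Set.ncard_univ] using this
  have hTQ : (T ∩ Q).ncard ≤ m := by
    rw [← hQcard]
    exact Set.ncard_le_ncard Set.inter_subset_right hQfin
  have hTsplit : T = (T ∩ U) ∪ (T ∩ Q) := by
    rw [← Set.inter_union_distrib_left]
    exact (Set.inter_eq_left.mpr (hP ▸ hT)).symm
  have hTn : T.ncard = l + 1 + m := by omega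
  have hle : T.ncard ≤ (T ∩ U).ncard + (T ∩ Q).ncard := by
    calc T.ncard = ((T ∩ U) ∪ (T ∩ Q)).ncard := by rw [← hTsplit]
      _ ≤ (T ∩ U).ncard + (T ∩ Q).ncard := Set.ncard_union_le _ _
  have hTUeq : (T ∩ U).ncard = l + 1 := by omega
  have hTQeq : (T ∩ Q).ncard = m := by omega
  have hQT : Q ⊆ T := by
    have : T ∩ Q = Q :=
      Set.eq_of_subset_of_ncard_le Set.inter_subset_right (by omega) hQfin
    intro x hx
    have hx' : x ∈ T ∩ Q := by rw [this]; exact hx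
    exact hx'.1
  refine ⟨hQT, fun i => ?_⟩
  -- surjectivity of f on T ∩ U
  have himg : f '' (T ∩ U) = Set.univ := by
    apply Set.eq_of_subset_of_ncard_le (Set.subset_univ _)
    rw [Set.ncard_univ, Set.ncard_image_of_injOn hfinj, hTUeq]; simp
  have : i ∈ f '' (T ∩ U) := himg ▸ Set.mem_univ i
  obtain ⟨x, ⟨hxT, hxU⟩, hfx⟩ := this
  rcases hfspec x hxU with h1 | h1 <;> rw [hfx] at h1 <;> rw [h1] at hxT
  · exact Or.inl ⟨hxT, fun hc => hnotboth i ⟨hxT, hc⟩⟩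
  · exact Or.inr ⟨hxT, fun hc => hnotboth i ⟨hc, hxT⟩⟩
end
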